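/- If a full-rank square matrix V over F[x] is in weak Popov form, then its orthogonality defect is zero, i.e., the sum of the row degrees of V equals the degree of det(V). -/

import Mathlib

open Polynomial

noncomputable section

variable {F : Type*} [Field F]

/-- The degree of a vector of polynomials: maximum of the coordinate degrees. -/
def vecDeg {n : ℕ} (v : Fin n → Polynomial F) : WithBot ℕ :=
  Finset.univ.sup fun j => (v j).degree

/-- The degree of a vector, as a natural number. -/
def vecDegNat {n : ℕ} (v : Fin n → Polynomial F) : ℕ :=
  Finset.univ.sup fun j => (v j).natDegree

/-- The leading position of a vector: the largest index attaining the degree. -/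
def leadPos {n : ℕ} (v : Fin n → Polynomial F) : ℕ :=
  (Finset.univ.filter fun j => (v j).degree = vecDeg v).sup fun j => (j : ℕ)

/-- The value function val(v) = n * deg v + LP(v). -/
def vecVal {n : ℕ} (v : Fin n → Polynomial F) : ℕ :=
  n * vecDegNat v + leadPos v

/-- The weight-embedding map Φ. -/
def PhiW (ν : ℕ) {n : ℕ} (w : Fin n → ℕ) (v : Fin n → Polynomial F) :
    Fin n → Polynomial F :=
  fun j => X ^ (w j) * (Polynomial.expand F ν (v j))

/-- The rows of the canonical basis matrix M. -/
def rowBasisM (ℓ : ℕ) (S G : Fin ℓ → Polynomial F) :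
    Fin (ℓ+1) → Fin (ℓ+1) → Polynomial F :=
  fun i => Fin.cases (Fin.cons 1 S) (fun i' => fun j => if j = i'.succ then G i' else 0) i

lemma coeff_prod_sum {ι : Type*} (s : Finset ι) (f : ι → Polynomial F) (d : ι → ℕ)
    (h : ∀ i ∈ s, (f i).natDegree ≤ d i) :
    (∏ i ∈ s, f i).coeff (∑ i ∈ s, d i) = ∏ i ∈ s, (f i).coeff (d i) := by
  induction s using Finset.cons_induction with
  | empty => simp
  | cons a s ha ih =>
    rw [Finset.prod_cons, Finset.sum_cons, Finset.prod_cons,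
      coeff_mul_add_eq_of_natDegree_le (h a (Finset.mem_cons_self a s))
        (le_trans (natDegree_prod_le _ _) (Finset.sum_le_sum fun i hi =>
          h i (Finset.mem_cons_of_mem hi))),
      ih fun i hi => h i (Finset.mem_cons_of_mem hi)]

theorem stmt3 (n : ℕ) (V : Matrix (Fin n) (Fin n) (Polynomial F)) (hV : V.det ≠ 0)
    (hwp : Function.Injective fun i => leadPos (V i)) :
    ∑ i, vecDegNat (V i) = V.det.natDegree := by
  rcases Nat.eq_zero_or_pos n with hn | hn
  · subst hn
    simp [Matrix.det_fin_zero]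
  have : NeZero n := ⟨hn.ne'⟩
  set d : Fin n → ℕ := fun i => vecDegNat (V i) with hd
  set D : ℕ := ∑ i, d i with hD
  -- each row is nonzero
  have hrow : ∀ i, ∃ j, V i j ≠ 0 := by
    intro i
    by_contra h
    push_neg at h
    exact hV (Matrix.det_eq_zero_of_row_eq_zero i (fun j => h j))
  -- choose the lead position as an element of Fin n
  have hfilter : ∀ i, ∃ pi : Fin n, (leadPos (V i) = (pi : ℕ) ∧
      (V i pi).degree = vecDeg (V i)) := by
    intro i
    have hne : (Finset.univ : Finset (Fin n)).Nonempty := Finset.univ_nonempty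
    obtain ⟨j0, _, hj0⟩ := Finset.exists_mem_eq_sup Finset.univ hne
      (fun j => (V i j).degree)
    have hj0' : (V i j0).degree = vecDeg (V i) := hj0.symm
    have hfne : (Finset.univ.filter fun j => (V i j).degree = vecDeg (V i)).Nonempty :=
      ⟨j0, Finset.mem_filter.mpr ⟨Finset.mem_univ _, hj0'⟩⟩
    obtain ⟨pi, hpm, hps⟩ := Finset.exists_mem_eq_sup _ hfne (fun j : Fin n => (j : ℕ))
    exact ⟨pi, hps, (Finset.mem_filter.mp hpm).2⟩
  choose p hp1 hp2 using hfilter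
  -- V i (p i) is nonzero and has natDegree d i
  have hVp : ∀ i, V i (p i) ≠ 0 := by
    intro i
    obtain ⟨j0, hj0⟩ := hrow i
    intro h0
    have : (V i j0).degree ≤ vecDeg (V i) := by
      unfold vecDeg; exact Finset.le_sup (f := fun j => (V i j).degree) (Finset.mem_univ j0)
    rw [← hp2 i, h0, degree_zero, le_bot_iff, degree_eq_bot] at this
    exact hj0 this
  have hdeg : ∀ i, (V i (p i)).natDegree = d i := by
    intro i
    show (V i (p i)).natDegree = vecDegNat (V i)
    unfold vecDegNat
    apply le_antisymm (Finset.le_sup (f := fun j => (V i j).natDegree) (Finset.mem_univ (p i)))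
    apply Finset.sup_le
    intro j _
    rcases eq_or_ne (V i j) 0 with h | h
    · simp [h]
    · have : (V i j).degree ≤ (V i (p i)).degree := by
        rw [hp2 i]; unfold vecDeg; exact Finset.le_sup (f := fun j => (V i j).degree) (Finset.mem_univ j)
      exact natDegree_le_natDegree this
  -- degree bounds for all entries
  have hentry : ∀ i j, (V i j).natDegree ≤ d i := by
    intro i j
    show _ ≤ vecDegNat (V i)
    unfold vecDegNat
    exact Finset.le_sup (f := fun j => (V i j).natDegree) (Finset.mem_univ j)
  -- the leading coefficient matrix
  set L : Matrix (Fin n) (Fin n) F := fun i j => (V i j).coeff (d i) with hL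
  have hLp : ∀ i, L i (p i) ≠ 0 := by
    intro i
    have := hVp i
    simp only [hL, ← hdeg i]
    rw [← leadingCoeff]
    exact leadingCoeff_ne_zero.mpr this
  have hLz : ∀ (i : Fin n) (j : Fin n), (p i : ℕ) < (j : ℕ) → L i j = 0 := by
    intro i j hij
    have hnot : (V i j).degree ≠ vecDeg (V i) := by
      intro h
      have : (j : ℕ) ≤ leadPos (V i) := by
        unfold leadPos
        exact Finset.le_sup (f := fun j : Fin n => (j : ℕ))
          (Finset.mem_filter.mpr ⟨Finset.mem_univ _, h⟩)
      rw [hp1 i] at this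
      omega
    have hlt : (V i j).degree < (d i : ℕ) := by
      have hle : (V i j).degree ≤ vecDeg (V i) := by
        unfold vecDeg; exact Finset.le_sup (f := fun j => (V i j).degree) (Finset.mem_univ j)
      have : vecDeg (V i) = ((d i : ℕ) : WithBot ℕ) := by
        rw [← hp2 i, degree_eq_natDegree (hVp i), hdeg i]
      rw [this] at hle hnot
      exact lt_of_le_of_ne hle hnot
    exact coeff_eq_zero_of_degree_lt hlt
  -- injectivity and the permutation
  have hpinj : Function.Injective p := by
    intro a b hab
    apply hwp
    simp only [hp1 a, hp1 b, hab]
  let σ : Equiv.Perm (Fin n) := Equiv.ofBijective p (Finite.injective_iff_bijective.mp hpinj)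
  have hσ : ∀ i, σ i = p i := fun i => rfl
  -- det L ≠ 0
  have hLdet : L.det ≠ 0 := by
    have hperm := Matrix.det_permute σ.symm L
    have htri : (L.submatrix (⇑σ.symm) id).BlockTriangular OrderDual.toDual := by
      intro i j hij
      show L (σ.symm i) (id j) = 0
      apply hLz
      have : p (σ.symm i) = i := by rw [← hσ]; exact σ.apply_symm_apply i
      rw [this]
      exact_mod_cast hij
    have hdiag : (L.submatrix (⇑σ.symm) id).det = ∏ i, L (σ.symm i) i :=
      Matrix.det_of_lowerTriangular _ htri
    have hne : (L.submatrix (⇑σ.symm) id).det ≠ 0 := by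
      rw [hdiag]
      apply Finset.prod_ne_zero_iff.mpr
      intro i _
      have hpi : p (σ.symm i) = i := by rw [← hσ]; exact σ.apply_symm_apply i
      have h2 := hLp (σ.symm i)
      rwa [hpi] at h2
    intro h0
    rw [hperm, h0, mul_zero] at hne
    exact hne rfl
  -- coeff of det V at D is det L
  have hcoeff : V.det.coeff D = L.det := by
    rw [Matrix.det_apply, Matrix.det_apply]
    rw [finset_sum_coeff]
    apply Finset.sum_congr rfl
    intro τ _
    rw [coeff_smul]
    congr 1
    have hDτ : D = ∑ i, d (τ i) := (Equiv.sum_comp τ d).symm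
    rw [hDτ, coeff_prod_sum _ _ (fun i => d (τ i)) (fun i _ => hentry (τ i) i)]
  -- conclude
  have hcne : V.det.coeff D ≠ 0 := by rw [hcoeff]; exact hLdet
  have hle1 : D ≤ V.det.natDegree := le_natDegree_of_ne_zero hcne
  have hle2 : V.det.natDegree ≤ D := by
    rw [Matrix.det_apply']
    apply natDegree_sum_le_of_forall_le
    intro τ _
    apply le_trans (natDegree_mul_le)
    have h1 : (Equiv.Perm.sign τ : Polynomial F).natDegree = 0 := by
      rcases Int.units_eq_one_or (Equiv.Perm.sign τ) with h | h <;> simp [h]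
    rw [h1, zero_add]
    calc (∏ i, V (τ i) i).natDegree ≤ ∑ i, (V (τ i) i).natDegree := natDegree_prod_le _ _
      _ ≤ ∑ i, d (τ i) := Finset.sum_le_sum fun i _ => hentry (τ i) i
      _ = D := Equiv.sum_comp τ d
  exact le_antisymm hle1 hle2
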